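/- arXiv:2405.19172 — 4 statements merged into one kernel-verified Lean document; each statement's English description precedes it below -/
import Mathlib

section
/- For a simple graph G on n ≥ 2 vertices and integer t ≥ 1, the generalized Sierpiński graph S(G,t) has exactly n^t vertices and |E(G)| · (n^t − 1)/(n − 1) edges. -/
variable {V : Type*}

/-- Adjacency of the generalized Sierpiński graph `S(G,t)` on words of length `t`:
`u` and `v` are adjacent iff there is an index `i` with `u j = v j` for `j < i`,
`u i` adjacent to `v i` in `G`, and `u j = v i`, `v j = u i` for `j > i`. -/
def sierAdj (G : SimpleGraph V) (t : ℕ) (u v : Fin t → V) : Prop :=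
  ∃ i : Fin t, (∀ j, j < i → u j = v j) ∧ G.Adj (u i) (v i) ∧
    ∀ j, i < j → u j = v i ∧ v j = u i

/-- The generalized Sierpiński graph `S(G,t)`. -/
def sier (G : SimpleGraph V) (t : ℕ) : SimpleGraph (Fin t → V) where
  Adj := sierAdj G t
  symm := by
    constructor
    rintro u v ⟨i, h1, h2, h3⟩
    exact ⟨i, fun j hj => (h1 j hj).symm, h2.symm,
      fun j hj => ⟨(h3 j hj).2, (h3 j hj).1⟩⟩
  loopless := by
    constructor
    rintro u ⟨i, h1, h2, h3⟩
    exact G.loopless.irrefl _ h2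

/-- `linkingAt G t p u v` : `uv` is a linking edge of `S(G,t)` appearing at
(0-indexed) position `p < t - 1`; in the paper's terminology this linking edge is
produced at step `t - p`, and its contraction is a vertex contracted at step `t - p`. -/
def linkingAt (G : SimpleGraph V) (t p : ℕ) (u v : Fin t → V) : Prop :=
  ∃ i : Fin t, i.val = p ∧ i.val + 1 < t ∧ (∀ j, j < i → u j = v j) ∧
    G.Adj (u i) (v i) ∧ ∀ j, i < j → u j = v i ∧ v j = u i

/-- `uv` is a linking edge of `S(G,t)` (an edge appearing at some step `≥ 2`). -/
def linking (G : SimpleGraph V) (t : ℕ) (u v : Fin t → V) : Prop :=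
  ∃ p, linkingAt G t p u v

/-- The equivalence relation on words generated by identifying the two endpoints
of each linking edge. -/
def gasketSetoid (G : SimpleGraph V) (t : ℕ) : Setoid (Fin t → V) :=
  Relation.EqvGen.setoid (linking G t)

/-- The generalized Sierpiński gasket graph `S[G,t]`, obtained from `S(G,t)` by
contracting all linking edges. -/
def gasket (G : SimpleGraph V) (t : ℕ) :
    SimpleGraph (Quotient (gasketSetoid G t)) where
  Adj x y := x ≠ y ∧ ∃ u v, Quotient.mk (gasketSetoid G t) u = x ∧
    Quotient.mk (gasketSetoid G t) v = y ∧ sierAdj G t u v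
  symm := by
    constructor
    rintro x y ⟨hxy, u, v, hu, hv, h⟩
    exact ⟨hxy.symm, v, u, hv, hu, (sier G t).adj_symm h⟩
  loopless := ⟨fun _ h => h.1 rfl⟩

/-- The expanded word `i j j ... j`; for `ij ∈ E(G)` its class in `S[G,t]` is the
contracted vertex `{i,j}_t`. -/
def topWord (t : ℕ) (i j : V) : Fin t → V := fun k => if k.val = 0 then i else j

/-- Word with prefix `w`, value `a` at position `i`, and `b` afterwards. -/
def sierWord {t : ℕ} (i : Fin t) (w : Fin i.val → V) (a b : V) : Fin t → V :=
  fun k => if h : k.val < i.val then w ⟨k.val, h⟩ else if k = i then a else b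

lemma sier_witness_unique {G : SimpleGraph V} {t : ℕ} {u v : Fin t → V}
    {i i' : Fin t} (h : ∀ j, j < i → u j = v j) (ha : G.Adj (u i) (v i))
    (h' : ∀ j, j < i' → u j = v j) (ha' : G.Adj (u i') (v i')) : i = i' := by
  by_contra hne
  rcases lt_or_gt_of_ne hne with hlt | hlt
  · exact ha.ne (h' i hlt)
  · exact ha'.ne (h i' hlt)

/-- The map classifying darts of `S(G,t)`. -/
def sierDartMk (G : SimpleGraph V) (t : ℕ)
    (x : Σ i : Fin t, (Fin i.val → V) × G.Dart) : (sier G t).Dart := by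
  refine ⟨(sierWord x.1 x.2.1 x.2.2.fst x.2.2.snd,
           sierWord x.1 x.2.1 x.2.2.snd x.2.2.fst), ?_⟩
  obtain ⟨i, w, d⟩ := x
  refine ⟨i, fun j hj => ?_, ?_, fun j hj => ?_⟩
  · simp [sierWord, Fin.lt_def.mp hj]
  · simpa [sierWord] using d.adj
  · have h2 : j ≠ i := Fin.ne_of_gt hj
    have h3 : ¬ j.val < i.val := Nat.not_lt.mpr (Fin.lt_def.mp hj).le
    constructor <;> simp [sierWord, h3, h2]

lemma sierDartMk_bijective (G : SimpleGraph V) (t : ℕ) :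
    Function.Bijective (sierDartMk G t) := by
  constructor
  · rintro ⟨i, w, d⟩ ⟨i', w', d'⟩ h
    have hu := congrArg (fun z : (sier G t).Dart => z.toProd.1) h
    have hv := congrArg (fun z : (sier G t).Dart => z.toProd.2) h
    simp only [sierDartMk] at hu hv
    -- both i and i' are witness positions for the same pair
    have hii : i = i' := by
      have a1 := (sierDartMk G t ⟨i, w, d⟩).adj
      obtain ⟨k, k1, k2, k3⟩ := a1
      have hiw : i = k := by
        refine sier_witness_unique (G := G) (u := (sierDartMk G t ⟨i, w, d⟩).toProd.1)
          (v := (sierDartMk G t ⟨i, w, d⟩).toProd.2) (fun j hj => ?_) ?_ k1 k2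
        · simp [sierDartMk, sierWord, Fin.lt_def.mp hj]
        · simpa [sierDartMk, sierWord] using d.adj
      have a2 := (sierDartMk G t ⟨i', w', d'⟩).adj
      obtain ⟨k', k1', k2', k3'⟩ := a2
      have hiw' : i' = k' := by
        refine sier_witness_unique (G := G) (u := (sierDartMk G t ⟨i', w', d'⟩).toProd.1)
          (v := (sierDartMk G t ⟨i', w', d'⟩).toProd.2) (fun j hj => ?_) ?_ k1' k2'
        · simp [sierDartMk, sierWord, Fin.lt_def.mp hj]
        · simpa [sierDartMk, sierWord] using d'.adj
      -- transfer across the dart equality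
      rw [hiw, hiw']
      have k1'' : ∀ j, j < k' → (sierDartMk G t ⟨i, w, d⟩).toProd.1 j
          = (sierDartMk G t ⟨i, w, d⟩).toProd.2 j := by
        intro j hj; rw [show (sierDartMk G t ⟨i, w, d⟩) = sierDartMk G t ⟨i', w', d'⟩ from h]
        exact k1' j hj
      have k2'' : G.Adj ((sierDartMk G t ⟨i, w, d⟩).toProd.1 k')
          ((sierDartMk G t ⟨i, w, d⟩).toProd.2 k') := by
        rw [show (sierDartMk G t ⟨i, w, d⟩) = sierDartMk G t ⟨i', w', d'⟩ from h]
        exact k2'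
      exact sier_witness_unique k1 k2 k1'' k2''
    subst hii
    have hw : w = w' := by
      funext j
      have := congrFun hu ⟨j.val, Nat.lt_trans j.isLt i.isLt⟩
      simpa [sierWord, j.isLt] using this
    have hd : d = d' := by
      have h1 := congrFun hu i
      have h2 := congrFun hv i
      simp [sierWord] at h1 h2
      exact SimpleGraph.Dart.ext _ _ (Prod.ext h1 h2)
    simp [hw, hd]
  · rintro ⟨⟨u, v⟩, i, h1, h2, h3⟩
    refine ⟨⟨i, fun j => u ⟨j.val, j.isLt.trans i.isLt⟩, ⟨(u i, v i), h2⟩⟩, ?_⟩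
    apply SimpleGraph.Dart.ext
    have hu : sierWord i (fun j : Fin i.val => u ⟨j.val, j.isLt.trans i.isLt⟩) (u i) (v i) = u := by
      funext k
      by_cases hk : k.val < i.val
      · simp [sierWord, hk]
      · by_cases hk2 : k = i
        · simp [sierWord, hk, hk2]
        · have hik : i < k := Fin.lt_def.mpr (by
            have := Fin.val_ne_of_ne hk2; omega)
          simp only [sierWord, dif_neg hk, if_neg hk2]
          exact (h3 k hik).1.symm
    have hv : sierWord i (fun j : Fin i.val => u ⟨j.val, j.isLt.trans i.isLt⟩) (v i) (u i) = v := by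
      funext k
      by_cases hk : k.val < i.val
      · simpa [sierWord, hk] using h1 ⟨k.val, hk.trans i.isLt⟩ (Fin.lt_def.mpr hk)
      · by_cases hk2 : k = i
        · simp [sierWord, hk, hk2]
        · have hik : i < k := Fin.lt_def.mpr (by
            have := Fin.val_ne_of_ne hk2; omega)
          simp only [sierWord, dif_neg hk, if_neg hk2]
          exact (h3 k hik).2.symm
    exact Prod.ext hu hv

/-- `S(G,t)` has `n^t` vertices and `|E(G)|·(n^t−1)/(n−1)` edges. -/
theorem stmt_0 [Fintype V] (G : SimpleGraph V) (n t : ℕ)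
    (hn : n = Fintype.card V) (h2 : 2 ≤ n) (ht : 1 ≤ t) :
    Nat.card (Fin t → V) = n ^ t ∧
    Nat.card (sier G t).edgeSet = Nat.card G.edgeSet * ((n ^ t - 1) / (n - 1)) := by
  classical
  constructor
  · simp [Nat.card_eq_fintype_card, hn]
  have hdart : Nat.card (Σ i : Fin t, (Fin i.val → V) × G.Dart)
      = Nat.card (sier G t).Dart :=
    Nat.card_eq_of_bijective _ (sierDartMk_bijective G t)
  have hS : ∑ i ∈ Finset.range t, n ^ i = (n ^ t - 1) / (n - 1) := Nat.geomSum_eq h2 t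
  have hsig : Fintype.card (Σ i : Fin t, (Fin i.val → V) × G.Dart)
      = (∑ i ∈ Finset.range t, n ^ i) * Fintype.card G.Dart := by
    rw [Fintype.card_sigma]
    have h1 : ∀ i : Fin t, Fintype.card ((Fin i.val → V) × G.Dart)
        = n ^ i.val * Fintype.card G.Dart := by
      intro i
      simp [Fintype.card_fun, hn]
    simp only [h1]
    rw [← Finset.sum_mul, Fin.sum_univ_eq_sum_range (fun i => n ^ i)]
  have hE1 : Fintype.card (sier G t).Dart = 2 * Nat.card (sier G t).edgeSet := by
    rw [SimpleGraph.dart_card_eq_twice_card_edges, Nat.card_eq_fintype_card,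
      SimpleGraph.edgeFinset, Set.toFinset_card]
  have hE2 : Fintype.card G.Dart = 2 * Nat.card G.edgeSet := by
    rw [SimpleGraph.dart_card_eq_twice_card_edges, Nat.card_eq_fintype_card,
      SimpleGraph.edgeFinset, Set.toFinset_card]
  have key : 2 * Nat.card (sier G t).edgeSet
      = 2 * (Nat.card G.edgeSet * ((n ^ t - 1) / (n - 1))) := by
    rw [← hE1, ← Nat.card_eq_fintype_card, ← hdart, Nat.card_eq_fintype_card, hsig, hE2, hS]
    ring
  exact Nat.eq_of_mul_eq_mul_left (by norm_num) key
end

section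
/- Every clique of S[G,t] with at least 4 vertices is entirely contained in a copy of G inside S[G,t]. -/
variable {V : Type*}

section Aux

variable {G : SimpleGraph V} {t : ℕ}

/-- `u` and `v` agree on all but possibly the last coordinate. -/
def samePre (t : ℕ) (u v : Fin t → V) : Prop :=
  ∀ k : Fin t, k.val + 1 < t → u k = v k

lemma samePre.refl (u : Fin t → V) : samePre t u u := fun _ _ => rfl

lemma samePre.symm {u v : Fin t → V} (h : samePre t u v) : samePre t v u :=
  fun k hk => (h k hk).symm

lemma samePre.trans {u v w : Fin t → V} (h1 : samePre t u v) (h2 : samePre t v w) :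
    samePre t u w := fun k hk => (h1 k hk).trans (h2 k hk)

lemma linking_iff {u v : Fin t → V} :
    linking G t u v ↔ ∃ i : Fin t, i.val + 1 < t ∧ (∀ j, j < i → u j = v j) ∧
      G.Adj (u i) (v i) ∧ ∀ j, i < j → u j = v i ∧ v j = u i := by
  constructor
  · rintro ⟨p, i, _, h⟩
    exact ⟨i, h⟩
  · rintro ⟨i, h⟩
    exact ⟨i.val, i, rfl, h⟩

lemma linking_symm {u v : Fin t → V} (h : linking G t u v) : linking G t v u := by
  rw [linking_iff] at h ⊢
  obtain ⟨i, h1, h2, h3, h4⟩ := h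
  exact ⟨i, h1, fun j hj => (h2 j hj).symm, h3.symm,
    fun j hj => ⟨(h4 j hj).2, (h4 j hj).1⟩⟩

lemma linking_unique {v u w : Fin t → V} (h1 : linking G t v u) (h2 : linking G t v w) :
    u = w := by
  rw [linking_iff] at h1 h2
  obtain ⟨i, hi, hpre, hadj, htail⟩ := h1
  obtain ⟨i', hi', hpre', hadj', htail'⟩ := h2
  have hii : i = i' := by
    rcases lt_trichotomy i i' with h | h | h
    · exfalso
      set j : Fin t := ⟨i'.val + 1, hi'⟩ with hj
      have hij : i < j := lt_trans h (by simp [hj, Fin.lt_def])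
      have hij' : i' < j := by simp [hj, Fin.lt_def]
      have e1 : v j = u i := (htail j hij).1
      have e2 : v j = w i' := (htail' j hij').1
      have e3 : v i' = u i := (htail i' h).1
      exact hadj'.ne (e3.trans (e1.symm.trans e2))
    · exact h
    · exfalso
      set j : Fin t := ⟨i.val + 1, hi⟩ with hj
      have hij : i < j := by simp [hj, Fin.lt_def]
      have hij' : i' < j := lt_trans h hij
      have e1 : v j = u i := (htail j hij).1
      have e2 : v j = w i' := (htail' j hij').1
      have e3 : v i = w i' := (htail' i h).1
      exact hadj.ne (e3.trans (e2.symm.trans e1))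
  subst hii
  funext j
  rcases lt_trichotomy j i with h | h | h
  · exact (hpre j h).symm.trans (hpre' j h)
  · subst h
    set j' : Fin t := ⟨j.val + 1, hi⟩ with hj'
    have hjj' : j < j' := by simp [hj', Fin.lt_def]
    have e1 : u j' = v j := (htail j' hjj').2
    have e2 : w j' = v j := (htail' j' hjj').2
    have e3 : v j' = u j := (htail j' hjj').1
    have e4 : v j' = w j := (htail' j' hjj').1
    exact e3.symm.trans e4
  · exact ((htail j h).2).trans ((htail' j h).2).symm

lemma linking_not_samePre {u v : Fin t → V} (h : linking G t u v) : ¬ samePre t u v := by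
  rw [linking_iff] at h
  obtain ⟨i, hi, _, hadj, _⟩ := h
  intro hs
  exact hadj.ne (hs i hi)

lemma eqvGen_cases {u v : Fin t → V} (h : Relation.EqvGen (linking G t) u v) :
    u = v ∨ linking G t u v := by
  induction h with
  | rel a b hab => exact Or.inr hab
  | refl a => exact Or.inl rfl
  | symm a b hab ih =>
    rcases ih with h | h
    · exact Or.inl h.symm
    · exact Or.inr (linking_symm h)
  | trans a b c hab hbc ih1 ih2 =>
    rcases ih1 with rfl | h1
    · exact ih2
    · rcases ih2 with rfl | h2
      · exact Or.inr h1
      · exact Or.inl (linking_unique (linking_symm h1) h2)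

lemma rep_cases {u v : Fin t → V}
    (h : Quotient.mk (gasketSetoid G t) u = Quotient.mk (gasketSetoid G t) v) :
    u = v ∨ linking G t u v :=
  eqvGen_cases (Quotient.exact h)

lemma mk_eq_of_linking {u v : Fin t → V} (h : linking G t u v) :
    Quotient.mk (gasketSetoid G t) u = Quotient.mk (gasketSetoid G t) v :=
  Quotient.sound (Relation.EqvGen.rel _ _ h)

lemma adj_reps {x y : Quotient (gasketSetoid G t)} (h : (gasket G t).Adj x y) :
    ∃ u v, Quotient.mk (gasketSetoid G t) u = x ∧
      Quotient.mk (gasketSetoid G t) v = y ∧ samePre t u v := by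
  obtain ⟨hne, u, v, hu, hv, i, hpre, hadj, htail⟩ := h
  by_cases hi : i.val + 1 < t
  · exfalso
    apply hne
    rw [← hu, ← hv]
    exact mk_eq_of_linking ⟨i.val, i, rfl, hi, hpre, hadj, htail⟩
  · refine ⟨u, v, hu, hv, fun k hk => hpre k ?_⟩
    have : k.val < i.val := by omega
    exact this

/-- `x` has a representative agreeing with `p` on all but the last coordinate. -/
def inCopy (G : SimpleGraph V) (t : ℕ) (p : Fin t → V) (x : Quotient (gasketSetoid G t)) :
    Prop := ∃ u, Quotient.mk (gasketSetoid G t) u = x ∧ samePre t u p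

lemma inCopy_mono {p q : Fin t → V} (hpq : samePre t p q) {x : Quotient (gasketSetoid G t)}
    (h : inCopy G t p x) : inCopy G t q x := by
  obtain ⟨u, hu, hs⟩ := h
  exact ⟨u, hu, hs.trans hpq⟩

lemma lemB {u u' v v' : Fin t → V} (h1 : linking G t u u') (h2 : linking G t v v')
    (h3 : samePre t u v) (h4 : samePre t u' v') : u = v := by
  rw [linking_iff] at h1 h2
  obtain ⟨i, hi, hpre, hadj, htail⟩ := h1
  obtain ⟨i', hi', hpre', hadj', htail'⟩ := h2
  have hii : i = i' := by
    rcases lt_trichotomy i i' with h | h | h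
    · exfalso
      have e1 : u i = v i := h3 i hi
      have e2 : u' i = v' i := h4 i hi
      have e3 : v i = v' i := hpre' i h
      exact hadj.ne (e1.trans (e3.trans e2.symm))
    · exact h
    · exfalso
      have e1 : u i' = v i' := h3 i' hi'
      have e2 : u' i' = v' i' := h4 i' hi'
      have e3 : u i' = u' i' := hpre i' h
      exact hadj'.ne (e1.symm.trans (e3.trans e2))
  subst hii
  funext j
  by_cases hj : j.val + 1 < t
  · exact h3 j hj
  · have hij : i < j := by
      have : i.val < j.val := by omega
      exact this
    have e1 : u j = u' i := (htail j hij).1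
    have e2 : v j = v' i := (htail' j hij).1
    exact e1.trans ((h4 i hi).symm ▸ e2.symm) |>.trans rfl

lemma lemC {P Q : Fin t → V} (hPQ : ¬ samePre t P Q) {x y : Quotient (gasketSetoid G t)}
    (hxP : inCopy G t P x) (hxQ : inCopy G t Q x)
    (hyP : inCopy G t P y) (hyQ : inCopy G t Q y) : x = y := by
  obtain ⟨u, hu, hup⟩ := hxP
  obtain ⟨u', hu', huq⟩ := hxQ
  obtain ⟨v, hv, hvp⟩ := hyP
  obtain ⟨v', hv', hvq⟩ := hyQ
  have hluu : linking G t u u' := by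
    rcases rep_cases (hu.trans hu'.symm) with heq | h
    · exact absurd (hup.symm.trans (heq ▸ huq)) hPQ
    · exact h
  have hlvv : linking G t v v' := by
    rcases rep_cases (hv.trans hv'.symm) with heq | h
    · exact absurd (hvp.symm.trans (heq ▸ hvq)) hPQ
    · exact h
  have huv : u = v := lemB hluu hlvv (hup.trans hvp.symm) (huq.trans hvq.symm)
  rw [← hu, ← hv, huv]

lemma copy_of_adj {x y : Quotient (gasketSetoid G t)} (h : (gasket G t).Adj x y)
    {r : Fin t → V} (hr : Quotient.mk (gasketSetoid G t) r = x) :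
    inCopy G t r y ∨ ∃ r', linking G t r r' ∧ inCopy G t r' y := by
  obtain ⟨u, v, hu, hv, hpre⟩ := adj_reps h
  rcases rep_cases (hu.trans hr.symm) with rfl | hl
  · exact Or.inl ⟨v, hv, hpre.symm⟩
  · exact Or.inr ⟨u, linking_symm hl, v, hv, hpre.symm⟩

end Aux

/-- every clique of `S[G,t]` with at least `4` vertices lies entirely in a
copy of `G` inside `S[G,t]`, i.e. all its vertices have representatives agreeing on the
first `t − 1` letters. -/
theorem stmt_11 (G : SimpleGraph V) (t : ℕ) (ht : 1 ≤ t)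
    (C : Finset (Quotient (gasketSetoid G t)))
    (hC : (gasket G t).IsClique (C : Set (Quotient (gasketSetoid G t))))
    (hcard : 4 ≤ C.card) :
    ∃ p : Fin t → V, ∀ x ∈ C, ∃ u : Fin t → V,
      Quotient.mk (gasketSetoid G t) u = x ∧ ∀ k : Fin t, k.val + 1 < t → u k = p k := by
  classical
  have hne : C.Nonempty := Finset.card_pos.mp (by omega)
  obtain ⟨x0, hx0⟩ := hne
  obtain ⟨w0, hw0⟩ := Quotient.exists_rep x0
  suffices h : ∃ p, ∀ x ∈ C, inCopy G t p x by
    obtain ⟨p, hp⟩ := h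
    exact ⟨p, fun x hx => hp x hx⟩
  by_cases hA : ∀ y ∈ C, inCopy G t w0 y
  · exact ⟨w0, hA⟩
  push_neg at hA
  obtain ⟨y0, hy0C, hy0A⟩ := hA
  have hx0A : inCopy G t w0 x0 := ⟨w0, hw0, samePre.refl w0⟩
  have hy0ne : y0 ≠ x0 := fun h => hy0A (h ▸ hx0A)
  have hadj0 : (gasket G t).Adj x0 y0 :=
    hC (Finset.mem_coe.mpr hx0) (Finset.mem_coe.mpr hy0C) hy0ne.symm
  rcases copy_of_adj hadj0 hw0 with h | ⟨w0', hlk, hy0B⟩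
  · exact absurd h hy0A
  have hw0' : Quotient.mk (gasketSetoid G t) w0' = x0 :=
    (mk_eq_of_linking hlk).symm.trans hw0
  have hx0B : inCopy G t w0' x0 := ⟨w0', hw0', samePre.refl w0'⟩
  by_cases hB : ∀ y ∈ C, inCopy G t w0' y
  · exact ⟨w0', hB⟩
  push_neg at hB
  obtain ⟨z0, hz0C, hz0B⟩ := hB
  have hz0nex : z0 ≠ x0 := fun h => hz0B (h ▸ hx0B)
  have hz0ney : z0 ≠ y0 := fun h => hz0B (h ▸ hy0B)
  have hadj1 : (gasket G t).Adj x0 z0 :=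
    hC (Finset.mem_coe.mpr hx0) (Finset.mem_coe.mpr hz0C) hz0nex.symm
  have hz0A : inCopy G t w0 z0 := by
    rcases copy_of_adj hadj1 hw0 with h | ⟨r', hlk', h⟩
    · exact h
    · rw [linking_unique hlk' hlk] at h
      exact absurd h hz0B
  obtain ⟨uz, huz, huzA⟩ := hz0A
  obtain ⟨v0, hv0, hv0B⟩ := hy0B
  have hadj2 : (gasket G t).Adj y0 z0 :=
    hC (Finset.mem_coe.mpr hy0C) (Finset.mem_coe.mpr hz0C) hz0ney.symm
  obtain ⟨a, b, ha, hb, hab⟩ := adj_reps hadj2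
  have hlky : linking G t v0 a := by
    rcases rep_cases (ha.trans hv0.symm) with heq | h
    · exfalso
      exact hz0B ⟨b, hb, (hab.symm.trans (heq ▸ samePre.refl v0)).trans hv0B⟩
    · exact linking_symm h
  have hlkz : linking G t uz b := by
    rcases rep_cases (hb.trans huz.symm) with heq | h
    · exfalso
      exact hy0A ⟨a, ha, (hab.trans (heq ▸ samePre.refl uz)).trans huzA⟩
    · exact linking_symm h
  -- the three pairwise-distinct copies: w0 (A), w0' (B), a (C')
  have hnsAB : ¬ samePre t w0 w0' := linking_not_samePre hlk
  have hnsAC : ¬ samePre t w0 a := fun s => hy0A ⟨a, ha, s.symm⟩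
  have hnsBC : ¬ samePre t w0' a := fun s => hz0B ⟨b, hb, hab.symm.trans s.symm⟩
  have hy0C' : inCopy G t a y0 := ⟨a, ha, samePre.refl a⟩
  have hz0A' : inCopy G t w0 z0 := ⟨uz, huz, huzA⟩
  have hz0C' : inCopy G t a z0 := ⟨b, hb, hab.symm⟩
  have hy0B' : inCopy G t w0' y0 := ⟨v0, hv0, hv0B⟩
  -- a fourth vertex
  have hnotsub : ¬ C ⊆ {x0, y0, z0} := by
    intro hsub
    have h1 := Finset.card_le_card hsub
    have h2 : ({x0, y0, z0} : Finset _).card ≤ 3 := by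
      apply le_trans (Finset.card_insert_le _ _)
      have h3 : ({y0, z0} : Finset _).card ≤ 2 := by
        apply le_trans (Finset.card_insert_le _ _)
        simp
      omega
    omega
  obtain ⟨x3, hx3C, hx3not⟩ := Finset.not_subset.mp hnotsub
  have hx3nex : x3 ≠ x0 := fun h => hx3not (by simp [h])
  have hx3ney : x3 ≠ y0 := fun h => hx3not (by simp [h])
  have hx3nez : x3 ≠ z0 := fun h => hx3not (by simp [h])
  have hadjx : (gasket G t).Adj x0 x3 :=
    hC (Finset.mem_coe.mpr hx0) (Finset.mem_coe.mpr hx3C) hx3nex.symm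
  have hadjy : (gasket G t).Adj y0 x3 :=
    hC (Finset.mem_coe.mpr hy0C) (Finset.mem_coe.mpr hx3C) hx3ney.symm
  have hadjz : (gasket G t).Adj z0 x3 :=
    hC (Finset.mem_coe.mpr hz0C) (Finset.mem_coe.mpr hx3C) hx3nez.symm
  have hx3AB : inCopy G t w0 x3 ∨ inCopy G t w0' x3 := by
    rcases copy_of_adj hadjx hw0 with h | ⟨r', hl', h⟩
    · exact Or.inl h
    · rw [linking_unique hl' hlk] at h
      exact Or.inr h
  have hx3BC : inCopy G t w0' x3 ∨ inCopy G t a x3 := by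
    rcases copy_of_adj hadjy hv0 with h | ⟨r', hl', h⟩
    · exact Or.inl (inCopy_mono hv0B h)
    · rw [linking_unique hl' hlky] at h
      exact Or.inr h
  have hx3AC : inCopy G t w0 x3 ∨ inCopy G t a x3 := by
    rcases copy_of_adj hadjz huz with h | ⟨r', hl', h⟩
    · exact Or.inl (inCopy_mono huzA h)
    · rw [linking_unique hl' hlkz] at h
      exact Or.inr (inCopy_mono hab.symm h)
  exfalso
  rcases hx3AB with h1 | h1
  · rcases hx3BC with h2 | h2
    · exact hx3nex (lemC hnsAB h1 h2 hx0A hx0B)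
    · exact hx3nez (lemC hnsAC h1 h2 hz0A' hz0C')
  · rcases hx3AC with h2 | h2
    · exact hx3nex (lemC hnsAB h2 h1 hx0A hx0B)
    · exact hx3ney (lemC hnsBC h1 h2 hy0B' hy0C')
end

section
/- For every simple graph G and every positive integer t, the clique number of the generalized Sierpiński gasket graph equals that of the base graph: ω(S[G,t]) = ω(G). -/
variable {V : Type*}

namespace SierAux

variable {G : SimpleGraph V}

lemma linking_symm {t : ℕ} {u v : Fin t → V} (h : linking G t u v) : linking G t v u := by
  obtain ⟨p, i, hip, hit, h1, h2, h3⟩ := h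
  exact ⟨p, i, hip, hit, fun j hj => (h1 j hj).symm, h2.symm,
    fun j hj => ⟨(h3 j hj).2, (h3 j hj).1⟩⟩

lemma linkingAt_not_lt {t p q : ℕ} {u v w : Fin t → V}
    (h1 : linkingAt G t p u v) (h2 : linkingAt G t q u w) : ¬ p < q := by
  intro hpq
  obtain ⟨i, hip, hit, ha1, ha2, ha3⟩ := h1
  obtain ⟨i', hip', hit', hb1, hb2, hb3⟩ := h2
  set j' : Fin t := ⟨i'.val + 1, hit'⟩ with hj'
  have hii' : i < i' := by rw [Fin.lt_def, hip, hip']; exact hpq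
  have h4 : u i' = v i := (ha3 i' hii').1
  have h5 : u j' = v i := (ha3 j' (lt_trans hii' (by simp [hj', Fin.lt_def]))).1
  have h6 : u j' = w i' := (hb3 j' (by simp [hj', Fin.lt_def])).1
  have hw : w i' = v i := h6.symm.trans h5
  rw [h4, hw] at hb2
  exact G.loopless.irrefl _ hb2

lemma linkingAt_pos_eq {t p q : ℕ} {u v w : Fin t → V}
    (h1 : linkingAt G t p u v) (h2 : linkingAt G t q u w) : p = q :=
  le_antisymm (not_lt.1 (linkingAt_not_lt h2 h1)) (not_lt.1 (linkingAt_not_lt h1 h2))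

lemma linking_partner_unique {t : ℕ} {u v w : Fin t → V}
    (h1 : linking G t u v) (h2 : linking G t u w) : v = w := by
  obtain ⟨p, hp⟩ := h1; obtain ⟨q, hq⟩ := h2
  have hpq := linkingAt_pos_eq hp hq
  subst hpq
  obtain ⟨i, hip, hit, ha1, ha2, ha3⟩ := hp
  obtain ⟨i', hip', _, hb1, hb2, hb3⟩ := hq
  have hii : i' = i := Fin.ext (by rw [hip, hip'])
  subst hii
  funext j
  rcases lt_trichotomy j i' with hj | hj | hj
  · rw [← ha1 j hj, ← hb1 j hj]
  · subst hj
    have hlt : j < (⟨j.val + 1, hit⟩ : Fin t) := by simp [Fin.lt_def]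
    rw [← (ha3 _ hlt).1, ← (hb3 _ hlt).1]
  · rw [(ha3 j hj).2, (hb3 j hj).2]

lemma eqvGen_linking_iff {t : ℕ} {u v : Fin t → V} :
    Relation.EqvGen (linking G t) u v ↔ u = v ∨ linking G t u v := by
  constructor
  · intro h
    induction h with
    | rel a b h => exact Or.inr h
    | refl a => exact Or.inl rfl
    | symm a b _ ih =>
      rcases ih with h | h
      · exact Or.inl h.symm
      · exact Or.inr (linking_symm h)
    | trans a b c _ _ ih1 ih2 =>
      rcases ih1 with h1 | h1 <;> rcases ih2 with h2 | h2
      · exact Or.inl (h1.trans h2)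
      · exact Or.inr (by rw [h1]; exact h2)
      · exact Or.inr (by rw [← h2]; exact h1)
      · exact Or.inl (linking_partner_unique (linking_symm h1) h2)
  · rintro (rfl | h)
    · exact Relation.EqvGen.refl _
    · exact Relation.EqvGen.rel _ _ h

lemma mk_eq_mk_iff {t : ℕ} {u v : Fin t → V} :
    Quotient.mk (gasketSetoid G t) u = Quotient.mk (gasketSetoid G t) v ↔
      u = v ∨ linking G t u v := by
  rw [Quotient.eq]
  exact eqvGen_linking_iff


lemma init_apply (u : Fin (s+1) → V) (j : Fin (s+1)) (hj : j.val < s) :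
    Fin.init u ⟨j.val, hj⟩ = u j := by
  show u (Fin.castSucc ⟨j.val, hj⟩) = u j
  rfl

lemma init_eq_apply {u w : Fin (s+1) → V} (h : Fin.init u = Fin.init w)
    (j : Fin (s+1)) (hj : j.val < s) : u j = w j := by
  have := congrFun h ⟨j.val, hj⟩
  rwa [init_apply, init_apply] at this

lemma sierAdj_last {u v : Fin (s+1) → V} (h : Fin.init u = Fin.init v)
    (ha : G.Adj (u (Fin.last s)) (v (Fin.last s))) : sierAdj G (s+1) u v := by
  refine ⟨Fin.last s, fun j hj => ?_, ha, fun j hj => absurd hj (Fin.le_last j).not_gt⟩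
  exact init_eq_apply h j (by simpa [Fin.lt_def] using hj)

lemma sierAdj_cases {u v : Fin (s+1) → V} (h : sierAdj G (s+1) u v) :
    linking G (s+1) u v ∨
      (Fin.init u = Fin.init v ∧ G.Adj (u (Fin.last s)) (v (Fin.last s))) := by
  obtain ⟨i, h1, h2, h3⟩ := h
  by_cases hi : i.val + 1 < s + 1
  · exact Or.inl ⟨i.val, i, rfl, hi, h1, h2, h3⟩
  · have hi' : i = Fin.last s := Fin.ext (by have := i.isLt; simp [Fin.val_last]; omega)
    subst hi'
    refine Or.inr ⟨funext fun k => ?_, h2⟩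
    exact h1 _ (Fin.castSucc_lt_last k)

lemma linking_init_ne {u v : Fin (s+1) → V} (h : linking G (s+1) u v) :
    Fin.init u ≠ Fin.init v := by
  obtain ⟨p, i, hip, hit, h1, h2, h3⟩ := h
  intro he
  exact h2.ne (init_eq_apply he i (by omega))

lemma linking_init_sierAdj {u v : Fin (s+1) → V} (h : linking G (s+1) u v) :
    sierAdj G s (Fin.init u) (Fin.init v) := by
  obtain ⟨p, i, hip, hit, h1, h2, h3⟩ := h
  have hi : i.val < s := by omega
  have hc : Fin.castSucc ⟨i.val, hi⟩ = i := Fin.ext rfl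
  refine ⟨⟨i.val, hi⟩, fun j hj => ?_, ?_, fun j hj => ?_⟩
  · show u j.castSucc = v j.castSucc
    exact h1 _ (by simpa [Fin.lt_def] using hj)
  · show G.Adj (u (Fin.castSucc ⟨i.val, hi⟩)) (v (Fin.castSucc ⟨i.val, hi⟩))
    rw [hc]; exact h2
  · have hji : i < j.castSucc := by
      rw [Fin.lt_def, Fin.coe_castSucc]
      simpa [Fin.lt_def] using hj
    constructor
    · show u j.castSucc = v (Fin.castSucc ⟨i.val, hi⟩)
      rw [hc]; exact (h3 _ hji).1
    · show v j.castSucc = u (Fin.castSucc ⟨i.val, hi⟩)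
      rw [hc]; exact (h3 _ hji).2

/-- One-position adjacency predicate. -/
def sadjAt (G : SimpleGraph V) (m : ℕ) (a b : Fin m → V) (i : Fin m) : Prop :=
  (∀ j, j < i → a j = b j) ∧ G.Adj (a i) (b i) ∧ ∀ j, i < j → a j = b i ∧ b j = a i

lemma tri_not_lt {m : ℕ} {a b c : Fin m → V} {i i' i'' : Fin m}
    (hab : sadjAt G m a b i) (hac : sadjAt G m a c i') (hbc : sadjAt G m b c i'') :
    ¬ i < i' := by
  intro hlt
  have hii'' : i'' = i := by
    rcases lt_trichotomy i'' i with h | h | h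
    · have h1 : a i'' = b i'' := hab.1 _ h
      have h2 : a i'' = c i'' := hac.1 _ (h.trans hlt)
      exact absurd (h1.symm.trans h2) hbc.2.1.ne
    · exact h
    · have h1 : b i = c i := hbc.1 _ h
      have h2 : a i = c i := hac.1 _ hlt
      exact absurd (h2.trans h1.symm) hab.2.1.ne
  subst hii''
  have h4 : a i' = b i'' := (hab.2.2 _ hlt).1
  have h5 : c i' = b i'' := (hbc.2.2 _ hlt).2
  have := hac.2.1
  rw [h4, h5] at this
  exact G.loopless.irrefl _ this

lemma triangle_of_sier {m : ℕ} {a b c : Fin m → V}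
    (hab : sierAdj G m a b) (hac : sierAdj G m a c) (hbc : sierAdj G m b c) :
    ∃ x y z : V, G.Adj x y ∧ G.Adj x z ∧ G.Adj y z := by
  obtain ⟨i, hab⟩ := hab
  obtain ⟨i', hac⟩ := hac
  obtain ⟨i'', hbc⟩ := hbc
  have hab' : sadjAt G m a b i := hab
  have hac' : sadjAt G m a c i' := hac
  have hbc' : sadjAt G m b c i'' := hbc
  have hcb' : sadjAt G m c b i'' :=
    ⟨fun j hj => (hbc'.1 j hj).symm, hbc'.2.1.symm,
      fun j hj => ⟨(hbc'.2.2 j hj).2, (hbc'.2.2 j hj).1⟩⟩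
  have h1 : ¬ i < i' := tri_not_lt hab' hac' hbc'
  have h2 : ¬ i' < i := tri_not_lt hac' hab' hcb'
  have hii' : i' = i := le_antisymm (not_lt.1 h1) (not_lt.1 h2)
  subst hii'
  have hii'' : i'' = i' := by
    rcases lt_trichotomy i'' i' with h | h | h
    · have ha1 : a i'' = b i'' := hab'.1 _ h
      have ha2 : a i'' = c i'' := hac'.1 _ h
      exact absurd (ha1.symm.trans ha2) hbc'.2.1.ne
    · exact h
    · have ha1 : b i'' = a i' := (hab'.2.2 _ h).2
      have ha2 : c i'' = a i' := (hac'.2.2 _ h).2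
      exact absurd (ha1.trans ha2.symm) hbc'.2.1.ne
  subst hii''
  exact ⟨a i'', b i'', c i'', hab'.2.1, hac'.2.1, hbc'.2.1⟩

def hasPre (G : SimpleGraph V) (s : ℕ) (x : Quotient (gasketSetoid G (s+1)))
    (p : Fin s → V) : Prop :=
  ∃ u, Quotient.mk (gasketSetoid G (s+1)) u = x ∧ Fin.init u = p

lemma two_pre {x : Quotient (gasketSetoid G (s+1))} {p q : Fin s → V}
    (hp : hasPre G s x p) (hq : hasPre G s x q) (hne : p ≠ q) :
    ∃ u v, Quotient.mk (gasketSetoid G (s+1)) u = x ∧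
      Quotient.mk (gasketSetoid G (s+1)) v = x ∧
      linking G (s+1) u v ∧ Fin.init u = p ∧ Fin.init v = q := by
  obtain ⟨u, hu, hup⟩ := hp
  obtain ⟨v, hv, hvq⟩ := hq
  rcases mk_eq_mk_iff.1 (hu.trans hv.symm) with rfl | hl
  · exact absurd (hup.symm.trans hvq) hne
  · exact ⟨u, v, hu, hv, hl, hup, hvq⟩

lemma rep_unique {a b c d : Fin (s+1) → V}
    (h1 : linking G (s+1) a b) (h2 : linking G (s+1) c d)
    (hac : Fin.init a = Fin.init c) (hbd : Fin.init b = Fin.init d) : a = c := by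
  obtain ⟨p, i, hip, hit, ha1, ha2, ha3⟩ := h1
  obtain ⟨q, i', hiq, hit', hb1, hb2, hb3⟩ := h2
  have his : i.val < s := by omega
  have his' : i'.val < s := by omega
  have hii' : i.val = i'.val := by
    rcases lt_trichotomy i.val i'.val with h | h | h
    · have h4 : c i = d i := hb1 i (by rw [Fin.lt_def]; exact h)
      have h5 := init_eq_apply hac i his
      have h6 := init_eq_apply hbd i his
      exact absurd ((h5.trans h4).trans h6.symm) ha2.ne
    · exact h
    · have h4 : a i' = b i' := ha1 i' (by rw [Fin.lt_def]; exact h)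
      have h5 := init_eq_apply hac i' his'
      have h6 := init_eq_apply hbd i' his'
      exact absurd ((h5.symm.trans h4).trans h6) hb2.ne
  have hlast : a (Fin.last s) = c (Fin.last s) := by
    have h4 : a (Fin.last s) = b i := (ha3 _ (by rw [Fin.lt_def, Fin.val_last]; exact his)).1
    have h5 : c (Fin.last s) = d i' := (hb3 _ (by rw [Fin.lt_def, Fin.val_last]; exact his')).1
    have hieq : i = (i' : Fin (s+1)) := Fin.ext hii'
    have h6 : b i = d i' := by
      rw [hieq]
      exact init_eq_apply hbd i' his'
    rw [h4, h5, ← h6]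
  funext j
  rcases Nat.lt_or_ge j.val s with hj | hj
  · exact init_eq_apply hac j hj
  · have hjl : j = Fin.last s := Fin.ext (by have := j.isLt; rw [Fin.val_last]; omega)
    rw [hjl]; exact hlast

lemma pre_eq_or {x : Quotient (gasketSetoid G (s+1))} {p q r : Fin s → V}
    (hp : hasPre G s x p) (hq : hasPre G s x q) (hr : hasPre G s x r)
    (hpq : p ≠ q) : r = p ∨ r = q := by
  by_cases hrp : r = p
  · exact Or.inl hrp
  obtain ⟨u, v, hu, hv, hl, hup, hvq⟩ := two_pre hp hq hpq
  obtain ⟨u', v', hu', hv', hl', hup', hvr⟩ := two_pre hp hr (fun h => hrp h.symm)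
  have huu : u = u' := by
    rcases mk_eq_mk_iff.1 (hu.trans hu'.symm) with h | h
    · exact h
    · exact absurd (hup.trans hup'.symm) (linking_init_ne h)
  subst huu
  have hvv : v = v' := linking_partner_unique hl hl'
  refine Or.inr ?_
  rw [← hvr, ← hvv]
  exact hvq

lemma class_eq_of_two {x y : Quotient (gasketSetoid G (s+1))} {p q : Fin s → V}
    (hxp : hasPre G s x p) (hxq : hasPre G s x q)
    (hyp : hasPre G s y p) (hyq : hasPre G s y q) (hpq : p ≠ q) : x = y := by
  obtain ⟨u, v, hu, hv, hl, hup, hvq⟩ := two_pre hxp hxq hpq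
  obtain ⟨u', v', hu', hv', hl', hup', hvq'⟩ := two_pre hyp hyq hpq
  have := rep_unique hl hl' (hup.trans hup'.symm) (hvq.trans hvq'.symm)
  rw [← hu, ← hu', this]

lemma adj_common_pre {x y : Quotient (gasketSetoid G (s+1))}
    (h : (gasket G (s+1)).Adj x y) :
    ∃ u v, Quotient.mk (gasketSetoid G (s+1)) u = x ∧
      Quotient.mk (gasketSetoid G (s+1)) v = y ∧ Fin.init u = Fin.init v ∧
      G.Adj (u (Fin.last s)) (v (Fin.last s)) := by
  obtain ⟨hne, u, v, hu, hv, hadj⟩ := h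
  rcases sierAdj_cases hadj with hl | ⟨hi, ha⟩
  · have : x = y := by
      rw [← hu, ← hv]
      exact Quotient.sound (Relation.EqvGen.rel _ _ hl)
    exact absurd this hne
  · exact ⟨u, v, hu, hv, hi, ha⟩


lemma caseA {n : ℕ} {S : Finset (Quotient (gasketSetoid G (s+1)))}
    (hS : (gasket G (s+1)).IsNClique n S) {w : Fin s → V}
    (hw : ∀ x ∈ S, hasPre G s x w) : ∃ T, G.IsNClique n T := by
  classical
  have hw' : ∀ x : Quotient (gasketSetoid G (s+1)),
      ∃ u, Quotient.mk (gasketSetoid G (s+1)) u = x ∧ (x ∈ S → Fin.init u = w) := by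
    intro x
    by_cases hx : x ∈ S
    · obtain ⟨u, h1, h2⟩ := hw x hx
      exact ⟨u, h1, fun _ => h2⟩
    · exact ⟨Quotient.out x, Quotient.out_eq x, fun h => absurd h hx⟩
  choose f hf1 hf2 using hw'
  set g : Quotient (gasketSetoid G (s+1)) → V := fun x => f x (Fin.last s) with hg
  have hadj : ∀ x ∈ S, ∀ y ∈ S, x ≠ y → G.Adj (g x) (g y) := by
    intro x hx y hy hne
    obtain ⟨u, v, hu, hv, hiuv, ha⟩ :=
      adj_common_pre (hS.1 (Finset.mem_coe.2 hx) (Finset.mem_coe.2 hy) hne)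
    by_cases hiw : Fin.init u = w
    · have hufx : u = f x := by
        rcases mk_eq_mk_iff.1 (hu.trans (hf1 x).symm) with h | h
        · exact h
        · exact absurd (hiw.trans (hf2 x hx).symm) (linking_init_ne h)
      have hvfy : v = f y := by
        rcases mk_eq_mk_iff.1 (hv.trans (hf1 y).symm) with h | h
        · exact h
        · exact absurd ((hiuv.symm.trans hiw).trans (hf2 y hy).symm) (linking_init_ne h)
      show G.Adj (f x (Fin.last s)) (f y (Fin.last s))
      rw [← hufx, ← hvfy]
      exact ha
    · have hxw : hasPre G s x w := ⟨f x, hf1 x, hf2 x hx⟩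
      have hyw : hasPre G s y w := ⟨f y, hf1 y, hf2 y hy⟩
      have hxu : hasPre G s x (Fin.init u) := ⟨u, hu, rfl⟩
      have hyu : hasPre G s y (Fin.init u) := ⟨v, hv, hiuv.symm⟩
      exact absurd (class_eq_of_two hxw hxu hyw hyu (fun h => hiw h.symm)) hne
  refine ⟨S.image g, ?_, ?_⟩
  · intro a ha b hb hab
    simp only [Finset.coe_image, Set.mem_image, Finset.mem_coe] at ha hb
    obtain ⟨x, hx, rfl⟩ := ha
    obtain ⟨y, hy, rfl⟩ := hb
    exact hadj x hx y hy (fun h => hab (by rw [h]))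
  · rw [Finset.card_image_of_injOn, hS.2]
    intro x hx y hy hxy
    by_contra hne
    exact (hadj x (Finset.mem_coe.1 hx) y (Finset.mem_coe.1 hy) hne).ne hxy

lemma upper {n : ℕ} {S : Finset (Quotient (gasketSetoid G (s+1)))}
    (hS : (gasket G (s+1)).IsNClique n S) : ∃ T, G.IsNClique n T := by
  classical
  rcases S.eq_empty_or_nonempty with rfl | ⟨x, hx⟩
  · refine ⟨∅, ?_⟩
    have hn : n = 0 := by simpa using hS
    simp [hn]
  by_cases hA : ∃ w, ∀ x ∈ S, hasPre G s x w
  · obtain ⟨w, hw⟩ := hA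
    exact caseA hS hw
  push_neg at hA
  have hclique := hS.1
  set p1 := Fin.init (Quotient.out x) with hp1def
  have hxp1 : hasPre G s x p1 := ⟨Quotient.out x, Quotient.out_eq x, rfl⟩
  obtain ⟨y, hy, hyp1⟩ := hA p1
  have hxy : x ≠ y := fun h => hyp1 (by rw [← h]; exact hxp1)
  obtain ⟨u, v, hu, hv, hiuv, _⟩ :=
    adj_common_pre (hclique (Finset.mem_coe.2 hx) (Finset.mem_coe.2 hy) hxy)
  set p := Fin.init u with hpdef
  have hxp : hasPre G s x p := ⟨u, hu, rfl⟩
  have hyp : hasPre G s y p := ⟨v, hv, hiuv.symm⟩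
  have hp1p : p1 ≠ p := fun h => hyp1 (by rw [h]; exact hyp)
  obtain ⟨z, hz, hzp⟩ := hA p
  have hzx : z ≠ x := fun h => hzp (by rw [h]; exact hxp)
  have hzy : z ≠ y := fun h => hzp (by rw [h]; exact hyp)
  obtain ⟨u2, v2, hu2, hv2, hiuv2, _⟩ :=
    adj_common_pre (hclique (Finset.mem_coe.2 hx) (Finset.mem_coe.2 hz) (Ne.symm hzx))
  set p' := Fin.init u2 with hp'def
  have hxp' : hasPre G s x p' := ⟨u2, hu2, rfl⟩
  have hzp' : hasPre G s z p' := ⟨v2, hv2, hiuv2.symm⟩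
  have hp'p1 : p' = p1 := by
    rcases pre_eq_or hxp1 hxp hxp' hp1p with h | h
    · exact h
    · exact absurd (by rw [← h]; exact hzp') hzp
  have hzp1 : hasPre G s z p1 := by rw [← hp'p1]; exact hzp'
  obtain ⟨u3, v3, hu3, hv3, hiuv3, _⟩ :=
    adj_common_pre (hclique (Finset.mem_coe.2 hy) (Finset.mem_coe.2 hz) (Ne.symm hzy))
  set p'' := Fin.init u3 with hp''def
  have hyp'' : hasPre G s y p'' := ⟨u3, hu3, rfl⟩
  have hzp'' : hasPre G s z p'' := ⟨v3, hv3, hiuv3.symm⟩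
  have hp''p1 : p'' ≠ p1 := fun h => hyp1 (by rw [← h]; exact hyp'')
  have hp''p : p'' ≠ p := fun h => hzp (by rw [← h]; exact hzp'')
  -- a triangle in G
  obtain ⟨a1, b1, _, _, hl1, hia1, hib1⟩ := two_pre hxp1 hxp hp1p
  obtain ⟨a2, b2, _, _, hl2, hia2, hib2⟩ := two_pre hzp1 hzp'' (fun h => hp''p1 h.symm)
  obtain ⟨a3, b3, _, _, hl3, hia3, hib3⟩ := two_pre hyp hyp'' (fun h => hp''p h.symm)
  have s1 : sierAdj G s p1 p := by
    rw [← hia1, ← hib1]; exact linking_init_sierAdj hl1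
  have s2 : sierAdj G s p1 p'' := by
    rw [← hia2, ← hib2]; exact linking_init_sierAdj hl2
  have s3 : sierAdj G s p p'' := by
    rw [← hia3, ← hib3]; exact linking_init_sierAdj hl3
  obtain ⟨t1, t2, t3, h12, h13, h23⟩ := triangle_of_sier s1 s2 s3
  -- S ⊆ {x, y, z}
  have hsub : S ⊆ {x, y, z} := by
    intro w' hw'
    by_contra hwmem
    simp only [Finset.mem_insert, Finset.mem_singleton] at hwmem
    push_neg at hwmem
    obtain ⟨hwx, hwy, hwz⟩ := hwmem
    obtain ⟨a, b, ha, hb, hiab, _⟩ :=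
      adj_common_pre (hclique (Finset.mem_coe.2 hw') (Finset.mem_coe.2 hx) hwx)
    have hwr1 : hasPre G s w' (Fin.init a) := ⟨a, ha, rfl⟩
    have hxr1 : hasPre G s x (Fin.init a) := ⟨b, hb, hiab.symm⟩
    obtain ⟨a', b', ha', hb', hiab', _⟩ :=
      adj_common_pre (hclique (Finset.mem_coe.2 hw') (Finset.mem_coe.2 hy) hwy)
    have hwr2 : hasPre G s w' (Fin.init a') := ⟨a', ha', rfl⟩
    have hyr2 : hasPre G s y (Fin.init a') := ⟨b', hb', hiab'.symm⟩
    obtain ⟨a'', b'', ha'', hb'', hiab'', _⟩ :=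
      adj_common_pre (hclique (Finset.mem_coe.2 hw') (Finset.mem_coe.2 hz) hwz)
    have hwr3 : hasPre G s w' (Fin.init a'') := ⟨a'', ha'', rfl⟩
    have hzr3 : hasPre G s z (Fin.init a'') := ⟨b'', hb'', hiab''.symm⟩
    have hr1 : Fin.init a = p1 ∨ Fin.init a = p := pre_eq_or hxp1 hxp hxr1 hp1p
    have hr2 : Fin.init a' = p ∨ Fin.init a' = p'' :=
      pre_eq_or hyp hyp'' hyr2 (fun h => hp''p h.symm)
    have hr3 : Fin.init a'' = p1 ∨ Fin.init a'' = p'' :=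
      pre_eq_or hzp1 hzp'' hzr3 (fun h => hp''p1 h.symm)
    rcases hr1 with h1 | h1 <;> rcases hr2 with h2 | h2
    · exact hwx (class_eq_of_two (h1 ▸ hwr1) (h2 ▸ hwr2) hxp1 hxp hp1p)
    · exact hwz (class_eq_of_two (h1 ▸ hwr1) (h2 ▸ hwr2) hzp1 hzp''
        (fun h => hp''p1 h.symm))
    · rcases hr3 with h3 | h3
      · exact hwx (class_eq_of_two (h3 ▸ hwr3) (h1 ▸ hwr1) hxp1 hxp hp1p)
      · exact hwy (class_eq_of_two (h1 ▸ hwr1) (h3 ▸ hwr3) hyp hyp''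
          (fun h => hp''p h.symm))
    · exact hwy (class_eq_of_two (h1 ▸ hwr1) (h2 ▸ hwr2) hyp hyp''
        (fun h => hp''p h.symm))
  have htri : G.IsNClique 3 {t1, t2, t3} :=
    SimpleGraph.is3Clique_triple_iff.2 ⟨h12, h13, h23⟩
  have hn3 : n ≤ 3 := by
    rw [← hS.2]
    have h1 := Finset.card_le_card hsub
    have h2 := Finset.card_insert_le x ({y, z} : Finset _)
    have h3 := Finset.card_insert_le y ({z} : Finset _)
    have h4 : ({z} : Finset _).card = 1 := Finset.card_singleton z
    omega
  have hcd : n ≤ ({t1, t2, t3} : Finset V).card := by rw [htri.2]; exact hn3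
  obtain ⟨T, hTsub, hTcard⟩ := Finset.exists_subset_card_eq hcd
  exact ⟨T, htri.1.subset (Finset.coe_subset.2 hTsub), hTcard⟩

lemma lower {n : ℕ} {T : Finset V} (hT : G.IsNClique n T) :
    ∃ S, (gasket G (s+1)).IsNClique n S := by
  classical
  rcases T.eq_empty_or_nonempty with rfl | ⟨c, hc⟩
  · refine ⟨∅, ?_⟩
    have hn : n = 0 := by simpa using hT
    simp [hn]
  set emb : V → (Fin (s+1) → V) := fun a => Fin.snoc (fun _ => c) a with hemb
  have hinj : ∀ a b : V, Quotient.mk (gasketSetoid G (s+1)) (emb a) =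
      Quotient.mk (gasketSetoid G (s+1)) (emb b) → a = b := by
    intro a b h
    rcases mk_eq_mk_iff.1 h with h | h
    · have := congrFun h (Fin.last s)
      simpa [hemb, Fin.snoc_last] using this
    · obtain ⟨q, i, hiq, hit, h1, h2, h3⟩ := h
      have hi : i.val < s := by omega
      have hieq : i = Fin.castSucc ⟨i.val, hi⟩ := Fin.ext rfl
      have hca : emb a i = c := by
        rw [hieq, hemb]
        simp only [Fin.snoc_castSucc]
      have hcb : emb b i = c := by
        rw [hieq, hemb]
        simp only [Fin.snoc_castSucc]
      rw [hca, hcb] at h2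
      exact absurd h2 (G.irrefl)
  set f : V → Quotient (gasketSetoid G (s+1)) :=
    fun a => Quotient.mk (gasketSetoid G (s+1)) (emb a) with hf
  have hadj : ∀ a b : V, a ∈ T → b ∈ T → a ≠ b → (gasket G (s+1)).Adj (f a) (f b) := by
    intro a b ha hb hab
    refine ⟨fun h => hab (hinj a b h), emb a, emb b, rfl, rfl, ?_⟩
    apply sierAdj_last
    · simp [hemb, Fin.init_snoc]
    · simpa [hemb, Fin.snoc_last] using hT.1 (Finset.mem_coe.2 ha) (Finset.mem_coe.2 hb) hab
  refine ⟨T.image f, ?_, ?_⟩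
  · intro a ha b hb hab
    simp only [Finset.coe_image, Set.mem_image, Finset.mem_coe] at ha hb
    obtain ⟨a0, ha0, rfl⟩ := ha
    obtain ⟨b0, hb0, rfl⟩ := hb
    exact hadj a0 b0 ha0 hb0 (fun h => hab (by rw [h]))
  · rw [Finset.card_image_of_injOn (fun a _ b _ h => hinj a b h), hT.2]

end SierAux

/-- `ω(S[G,t]) = ω(G)` for every graph `G` and every positive integer `t`. -/
theorem stmt_12 (G : SimpleGraph V) (t : ℕ) (ht : 1 ≤ t) :
    (gasket G t).cliqueNum = G.cliqueNum := by
  obtain ⟨s, rfl⟩ : ∃ s, t = s + 1 := ⟨t - 1, (Nat.succ_pred_eq_of_pos ht).symm⟩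
  have hset : {n | ∃ S, (gasket G (s+1)).IsNClique n S} = {n | ∃ T, G.IsNClique n T} :=
    Set.ext fun n => ⟨fun ⟨_, h⟩ => SierAux.upper h, fun ⟨_, h⟩ => SierAux.lower h⟩
  rw [SimpleGraph.cliqueNum, SimpleGraph.cliqueNum, hset]
end

section
/- For every simple graph G and positive integer t, χ(G) ≤ χ(S[G,t]) ≤ χ(G) + 1. -/
variable {V : Type*}

/-! ### auxiliary machinery -/

lemma two_pow_sum (n : ℕ) : ∑ k ∈ Finset.range n, 2 ^ k = 2 ^ n - 1 := by
  induction n with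
  | zero => simp
  | succ n ih =>
    rw [Finset.sum_range_succ, ih]
    have : 0 < 2 ^ n := pow_pos (by norm_num) n
    omega

def wt (t j : ℕ) : ℕ := if j = t - 1 then 1 else 2 ^ (t - 2 - j)

lemma wt_key {t i : ℕ} (hi : i + 1 < t) :
    ∑ j ∈ Finset.range t, (if i < j then wt t j else 0) = wt t i := by
  obtain ⟨m, rfl⟩ : ∃ m, t = m + 1 := ⟨t - 1, by omega⟩
  have hm : i < m := by omega
  rw [Finset.sum_range_succ]
  have hlast : wt (m + 1) m = 1 := by simp [wt]
  have h1 : ∑ j ∈ Finset.range m, (if i < j then wt (m + 1) j else 0)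
      = ∑ j ∈ Finset.range m, (if i < j then 2 ^ (m - 1 - j) else 0) := by
    refine Finset.sum_congr rfl fun j hj => ?_
    rw [Finset.mem_range] at hj
    by_cases h : i < j
    · rw [if_pos h, if_pos h]
      unfold wt
      rw [if_neg (by omega)]
      have e : m + 1 - 2 - j = m - 1 - j := by omega
      rw [e]
    · rw [if_neg h, if_neg h]
  have h2 : ∑ j ∈ Finset.range m, (if i < j then 2 ^ (m - 1 - j) else 0)
      = ∑ j ∈ Finset.range m, (if j < m - 1 - i then 2 ^ j else 0) := by
    rw [← Finset.sum_range_reflect]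
    refine Finset.sum_congr rfl fun j hj => ?_
    rw [Finset.mem_range] at hj
    by_cases h : i < m - 1 - j
    · rw [if_pos h, if_pos (by omega)]
      congr 1
      omega
    · rw [if_neg h, if_neg (by omega)]
  have h3 : ∑ j ∈ Finset.range m, (if j < m - 1 - i then 2 ^ j else 0)
      = 2 ^ (m - 1 - i) - 1 := by
    rw [← Finset.sum_filter]
    have : (Finset.range m).filter (fun j => j < m - 1 - i) = Finset.range (m - 1 - i) := by
      ext j
      simp only [Finset.mem_filter, Finset.mem_range]
      omega
    rw [this, two_pow_sum]
  have hwi : wt (m + 1) i = 2 ^ (m - 1 - i) := by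
    unfold wt
    rw [if_neg (by omega)]
    have e : m + 1 - 2 - i = m - 1 - i := by omega
    rw [e]
  rw [h1, h2, h3, if_pos hm, hlast, hwi]
  have : 0 < 2 ^ (m - 1 - i) := pow_pos (by norm_num) _
  omega

def dInv {M : Type*} [CommRing M] (t : ℕ) (φ : V → M) (u : Fin t → V) : M :=
  ∑ j : Fin t, (wt t j.val : M) * φ (u j)

lemma wt_key_fin {t : ℕ} {i : Fin t} (hi : i.val + 1 < t) :
    ∑ j ∈ Finset.univ.filter (fun j : Fin t => i < j), wt t j.val = wt t i.val := by
  rw [Finset.sum_filter]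
  have : ∑ j : Fin t, (if i < j then wt t j.val else 0)
      = ∑ j ∈ Finset.range t, (if i.val < j then wt t j else 0) := by
    rw [← Fin.sum_univ_eq_sum_range (fun j => if i.val < j then wt t j else 0) t]
    exact Finset.sum_congr rfl fun j _ => by simp only [Fin.lt_def]
  rw [this, wt_key hi]

lemma dInv_linking {G : SimpleGraph V} {t : ℕ} {M : Type*} [CommRing M] (φ : V → M)
    {u v : Fin t → V} (h : linking G t u v) : dInv t φ u = dInv t φ v := by
  obtain ⟨p, i, hip, hit, h1, h2, h3⟩ := h
  have split : ∀ w : Fin t → V,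
      dInv t φ w
        = (∑ j ∈ Finset.univ.filter (fun j : Fin t => j < i), (wt t j.val : M) * φ (w j))
          + (wt t i.val : M) * φ (w i)
          + ∑ j ∈ Finset.univ.filter (fun j : Fin t => i < j), (wt t j.val : M) * φ (w j) := by
    intro w
    have e1 : (Finset.univ.filter fun j : Fin t => ¬ j < i)
        = insert i (Finset.univ.filter fun j : Fin t => i < j) := by
      ext j
      simp only [Finset.mem_filter, Finset.mem_univ, true_and, Finset.mem_insert,
        Fin.lt_def, Fin.ext_iff]
      omega
    rw [dInv, ← Finset.sum_filter_add_sum_filter_not Finset.univ (fun j : Fin t => j < i), e1,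
      Finset.sum_insert (by simp)]
    ring
  have hA : ∑ j ∈ Finset.univ.filter (fun j : Fin t => j < i), (wt t j.val : M) * φ (u j)
      = ∑ j ∈ Finset.univ.filter (fun j : Fin t => j < i), (wt t j.val : M) * φ (v j) :=
    Finset.sum_congr rfl fun j hj => by rw [h1 j (Finset.mem_filter.mp hj).2]
  have hU : ∑ j ∈ Finset.univ.filter (fun j : Fin t => i < j), (wt t j.val : M) * φ (u j)
      = (wt t i.val : M) * φ (v i) := by
    have e : ∑ j ∈ Finset.univ.filter (fun j : Fin t => i < j), (wt t j.val : M) * φ (u j)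
        = ∑ j ∈ Finset.univ.filter (fun j : Fin t => i < j), (wt t j.val : M) * φ (v i) :=
      Finset.sum_congr rfl fun j hj => by rw [(h3 j (Finset.mem_filter.mp hj).2).1]
    rw [e, ← Finset.sum_mul, ← Nat.cast_sum, wt_key_fin hit]
  have hV : ∑ j ∈ Finset.univ.filter (fun j : Fin t => i < j), (wt t j.val : M) * φ (v j)
      = (wt t i.val : M) * φ (u i) := by
    have e : ∑ j ∈ Finset.univ.filter (fun j : Fin t => i < j), (wt t j.val : M) * φ (v j)
        = ∑ j ∈ Finset.univ.filter (fun j : Fin t => i < j), (wt t j.val : M) * φ (u i) :=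
      Finset.sum_congr rfl fun j hj => by rw [(h3 j (Finset.mem_filter.mp hj).2).2]
    rw [e, ← Finset.sum_mul, ← Nat.cast_sum, wt_key_fin hit]
  rw [split u, split v, hA, hU, hV]
  ring

lemma dInv_eqvGen {G : SimpleGraph V} {t : ℕ} {M : Type*} [CommRing M] (φ : V → M)
    {u v : Fin t → V} (h : Relation.EqvGen (linking G t) u v) : dInv t φ u = dInv t φ v := by
  induction h with
  | rel _ _ h => exact dInv_linking φ h
  | refl => rfl
  | symm _ _ _ ih => exact ih.symm
  | trans _ _ _ _ _ ih1 ih2 => exact ih1.trans ih2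

lemma dInv_ne {t : ℕ} {M : Type*} [CommRing M] (φ : V → M) {u v : Fin t → V} {i : Fin t}
    (hi : i.val = t - 1) (hagree : ∀ j : Fin t, j ≠ i → u j = v j)
    (hne : φ (u i) ≠ φ (v i)) : dInv t φ u ≠ dInv t φ v := by
  have hw : wt t i.val = 1 := by simp [wt, hi]
  have key : ∀ w : Fin t → V,
      dInv t φ w = (∑ j ∈ Finset.univ.erase i, (wt t j.val : M) * φ (w j)) + φ (w i) := by
    intro w
    rw [dInv, ← Finset.sum_erase_add Finset.univ _ (Finset.mem_univ i), hw, Nat.cast_one, one_mul]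
  intro hEq
  rw [key u, key v,
    (Finset.sum_congr rfl fun j hj => by rw [hagree j (Finset.ne_of_mem_erase hj)] :
      ∑ j ∈ Finset.univ.erase i, (wt t j.val : M) * φ (u j)
      = ∑ j ∈ Finset.univ.erase i, (wt t j.val : M) * φ (v j))] at hEq
  exact hne (add_left_cancel hEq)

lemma gasket_colorable {G : SimpleGraph V} {t n : ℕ} (h : G.Colorable n) :
    (gasket G t).Colorable (n + 1) := by
  obtain ⟨c⟩ := h
  let φ : V → ZMod (n + 1) := fun x => ((c x : ℕ) : ZMod (n + 1))
  let D : Quotient (gasketSetoid G t) → ZMod (n + 1) :=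
    Quotient.lift (dInv t φ) (fun u v h => dInv_eqvGen φ h)
  have valid : ∀ {x y}, (gasket G t).Adj x y → D x ≠ D y := by
    rintro x y ⟨hxy, u, v, rfl, rfl, i, h1, h2, h3⟩
    by_cases hit : i.val + 1 < t
    · exact absurd
        (Quotient.sound (Relation.EqvGen.rel _ _ ⟨i.val, i, rfl, hit, h1, h2, h3⟩)) hxy
    · have hi : i.val = t - 1 := by have := i.isLt; omega
      have hagree : ∀ j : Fin t, j ≠ i → u j = v j := by
        intro j hj
        refine h1 j ?_
        have hj' : j.val ≠ i.val := fun e => hj (Fin.ext e)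
        have := j.isLt
        exact Fin.lt_def.mpr (by omega)
      have hφ : φ (u i) ≠ φ (v i) := by
        intro hEq
        have hval := congrArg ZMod.val hEq
        rw [ZMod.val_cast_of_lt (by have := (c (u i)).isLt; omega),
          ZMod.val_cast_of_lt (by have := (c (v i)).isLt; omega)] at hval
        exact c.valid h2 (Fin.ext hval)
      exact dInv_ne φ hi hagree hφ
  have C : (gasket G t).Coloring (ZMod (n + 1)) := SimpleGraph.Coloring.mk D fun h => valid h
  have := C.colorable
  rwa [ZMod.card] at this

lemma colorable_of_gasket {G : SimpleGraph V} {t n : ℕ} (ht : 1 ≤ t)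
    (h : (gasket G t).Colorable n) : G.Colorable n := by
  classical
  obtain ⟨C⟩ := h
  cases isEmpty_or_nonempty V with
  | inl hV => exact ⟨SimpleGraph.Coloring.mk (fun v => isEmptyElim v) (fun {v} => isEmptyElim v)⟩
  | inr hV =>
    obtain ⟨x⟩ := hV
    have hi0 : t - 1 < t := by omega
    set i0 : Fin t := ⟨t - 1, hi0⟩ with hi0def
    let wrd : V → Fin t → V := fun a k => if k = i0 then a else x
    have hwrd_at : ∀ a, wrd a i0 = a := fun a => if_pos rfl
    have hwrd_ne : ∀ a (j : Fin t), j ≠ i0 → wrd a j = x := fun a j hj => if_neg hj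
    have hAdj : ∀ {a b : V}, G.Adj a b →
        (gasket G t).Adj (Quotient.mk (gasketSetoid G t) (wrd a))
          (Quotient.mk (gasketSetoid G t) (wrd b)) := by
      intro a b hab
      refine ⟨?_, wrd a, wrd b, rfl, rfl, i0, ?_, ?_, ?_⟩
      · intro hEq
        have h' : Relation.EqvGen (linking G t) (wrd a) (wrd b) := Quotient.exact hEq
        have hd := dInv_eqvGen (M := ZMod 2) (fun z => if z = a then 1 else 0) h'
        have hagree : ∀ j : Fin t, j ≠ i0 → wrd a j = wrd b j := fun j hj => by
          rw [hwrd_ne a j hj, hwrd_ne b j hj]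
        have hφ : (if wrd a i0 = a then (1 : ZMod 2) else 0)
            ≠ (if wrd b i0 = a then (1 : ZMod 2) else 0) := by
          rw [hwrd_at, hwrd_at, if_pos rfl, if_neg hab.ne']
          exact one_ne_zero
        exact dInv_ne (fun z => if z = a then (1 : ZMod 2) else 0) rfl hagree hφ hd
      · intro j hj
        have hj' : j ≠ i0 := Fin.ne_of_lt hj
        rw [hwrd_ne a j hj', hwrd_ne b j hj']
      · rw [hwrd_at, hwrd_at]; exact hab
      · intro j hj
        exact absurd hj (not_lt.mpr (Fin.le_def.mpr (Nat.le_pred_of_lt j.isLt)))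
    exact ⟨C.comp ⟨fun a => Quotient.mk (gasketSetoid G t) (wrd a), fun h => hAdj h⟩⟩

/-- `χ(G) ≤ χ(S[G,t]) ≤ χ(G) + 1` for every graph `G` and every `t ≥ 1`. -/
theorem stmt_16 (G : SimpleGraph V) (t : ℕ) (ht : 1 ≤ t) :
    G.chromaticNumber ≤ (gasket G t).chromaticNumber ∧
    (gasket G t).chromaticNumber ≤ G.chromaticNumber + 1 := by
  constructor
  · exact SimpleGraph.chromaticNumber_le_of_forall_imp fun n hn => colorable_of_gasket ht hn
  · rcases eq_or_ne G.chromaticNumber ⊤ with h | h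
    · rw [h]
      exact le_top.trans_eq (top_add 1).symm
    · have hc := SimpleGraph.colorable_of_chromaticNumber_ne_top h
      have h3 := SimpleGraph.chromaticNumber_le_iff_colorable.mpr
        (gasket_colorable (t := t) hc)
      have h4 : ((G.chromaticNumber.toNat + 1 : ℕ) : ℕ∞) = G.chromaticNumber + 1 := by
        push_cast
        rw [ENat.coe_toNat h]
      rwa [h4] at h3
end
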